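/- Let N ≥ 1 and let b : ℝ → ℂ^N be a continuously differentiable solution of the toy model system: for each j = 1,…,N, db_j/dt = i(−|b_j|² b_j + 2 \bar{b_j}(b_{j−1}² + b_{j+1}²)), with the Dirichlet boundary convention b_0(t) = b_{N+1}(t) = 0. Then the mass M[b(t)] = Σ_{j=1}^N |b_j(t)|² is constant in time: M[b(t)] = M[b(0)] for all t. -/

import Mathlib

/-- Mass conservation for the toy model system with Dirichlet
boundary conditions `b 0 = b (N+1) = 0`. -/
theorem toy_model_mass_conservation
    (N : ℕ) (hN : 1 ≤ N) (b : ℝ → ℕ → ℂ)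
    (hbc0 : ∀ t : ℝ, b t 0 = 0) (hbcN : ∀ t : ℝ, b t (N + 1) = 0)
    (hode : ∀ j ∈ Finset.Icc 1 N, ∀ t : ℝ,
      HasDerivAt (fun s : ℝ => b s j)
        (Complex.I * (-((Complex.normSq (b t j) : ℂ)) * b t j
          + 2 * (starRingEnd ℂ) (b t j) * ((b t (j - 1)) ^ 2 + (b t (j + 1)) ^ 2))) t) :
    ∀ t : ℝ, ∑ j ∈ Finset.Icc 1 N, Complex.normSq (b t j)
      = ∑ j ∈ Finset.Icc 1 N, Complex.normSq (b 0 j) := by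
  have key : ∀ s : ℝ,
      HasDerivAt (fun u : ℝ => ∑ j ∈ Finset.Icc 1 N, Complex.normSq (b u j)) 0 s := by
    intro s
    set d : ℕ → ℂ := fun j =>
      Complex.I * (-((Complex.normSq (b s j) : ℂ)) * b s j
        + 2 * (starRingEnd ℂ) (b s j) * ((b s (j - 1)) ^ 2 + (b s (j + 1)) ^ 2)) with hd
    have hderiv : ∀ j ∈ Finset.Icc 1 N,
        HasDerivAt (fun u : ℝ => Complex.normSq (b u j))
          ((starRingEnd ℂ (d j) * b s j + starRingEnd ℂ (b s j) * d j).re) s := by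
      intro j hj
      have h0 := hode j hj s
      have h1 : HasDerivAt (fun u : ℝ => starRingEnd ℂ (b u j)) (starRingEnd ℂ (d j)) s :=
        h0.star
      have h2 := h1.mul h0
      have h3 := (Complex.reCLM.hasFDerivAt).comp_hasDerivAt s h2
      have hfun : (fun u : ℝ => Complex.reCLM (starRingEnd ℂ (b u j) * b u j))
          = fun u : ℝ => Complex.normSq (b u j) := by
        funext u
        simp only [Complex.reCLM_apply]
        rw [← Complex.normSq_eq_conj_mul_self, Complex.ofReal_re]
      rw [show (Complex.reCLM ∘ ((fun u : ℝ => starRingEnd ℂ (b u j)) * fun s => b s j))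
          = fun u : ℝ => Complex.reCLM (starRingEnd ℂ (b u j) * b u j) from rfl, hfun] at h3
      exact h3
    have hsum := HasDerivAt.fun_sum hderiv
    have hzero : ∑ j ∈ Finset.Icc 1 N,
        (starRingEnd ℂ (d j) * b s j + starRingEnd ℂ (b s j) * d j).re = 0 := by
      have hre : ∑ j ∈ Finset.Icc 1 N,
          (starRingEnd ℂ (d j) * b s j + starRingEnd ℂ (b s j) * d j).re
          = (∑ j ∈ Finset.Icc 1 N,
              (starRingEnd ℂ (d j) * b s j + starRingEnd ℂ (b s j) * d j)).re := by
        rw [Complex.re_sum]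
      rw [hre]
      set h : ℕ → ℂ := fun i =>
        (starRingEnd ℂ (b s (i + 1)))^2 * (b s i)^2
          - (b s (i + 1))^2 * (starRingEnd ℂ (b s i))^2 with hh
      have hterm : ∀ j ∈ Finset.Icc 1 N,
          starRingEnd ℂ (d j) * b s j + starRingEnd ℂ (b s j) * d j
            = 2 * Complex.I * (h (j - 1) - h j) := by
        intro j hj
        have hj1 : 1 ≤ j := (Finset.mem_Icc.mp hj).1
        have hjj : j - 1 + 1 = j := Nat.succ_pred_eq_of_pos hj1
        simp only [hd, hh, hjj, map_mul, map_add, map_neg, map_pow, Complex.conj_I,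
          Complex.conj_conj, Complex.conj_ofReal, map_ofNat,
          Complex.normSq_eq_conj_mul_self]
        ring
      rw [Finset.sum_congr rfl hterm, ← Finset.mul_sum]
      have htel : ∑ j ∈ Finset.Icc 1 N, (h (j - 1) - h j) = h 0 - h N := by
        rw [← Finset.Ico_add_one_right_eq_Icc, Finset.sum_Ico_eq_sum_range]
        simp only [Nat.succ_sub_one, Nat.add_sub_cancel_left]
        simpa [Nat.add_comm] using Finset.sum_range_sub' h N
      rw [htel]
      have h0 : h 0 = 0 := by simp [hh, hbc0 s]
      have hN' : h N = 0 := by simp [hh, hbcN s]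
      rw [h0, hN']
      simp
    rw [hzero] at hsum
    exact hsum
  intro t
  exact is_const_of_deriv_eq_zero (fun x => (key x).differentiableAt)
    (fun x => (key x).deriv) t 0
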